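/- Let p > 2, δ > 0, and t > 0. Then there exists a constant C depending only on p such that for all ξ ∈ ℝ^d with ξ ≠ 0, ∫_0^t e^{−δ(t−s)|ξ|^2} s^{−2/p} ds ≤ C δ^{−(1−1/p)} t^{−1/p} |ξ|^{−2(1−1/p)}. -/

import Mathlib

open MeasureTheory

lemma exp_neg_le_rpow_neg {a : ℝ} (ha0 : 0 < a) (ha1 : a ≤ 1) {x : ℝ} (hx : 0 < x) :
    Real.exp (-x) ≤ x ^ (-a) := by
  rw [Real.exp_neg, Real.rpow_neg hx.le]
  have h1 : x ^ a ≤ Real.exp x := by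
    rcases le_total x 1 with h | h
    · calc x ^ a ≤ 1 := Real.rpow_le_one hx.le h ha0.le
        _ ≤ Real.exp x := by nlinarith [Real.add_one_le_exp x]
    · calc x ^ a ≤ x ^ (1:ℝ) := Real.rpow_le_rpow_of_exponent_le h ha1
        _ = x := Real.rpow_one x
        _ ≤ Real.exp x := by nlinarith [Real.add_one_le_exp x]
  exact inv_anti₀ (Real.rpow_pos_of_pos hx a) h1

set_option maxHeartbeats 1000000 in
theorem stmt6 (p : ℝ) (hp : 2 < p) :
    ∃ C > 0, ∀ δ t : ℝ, 0 < δ → 0 < t →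
      ∀ (d : ℕ) (ξ : EuclideanSpace ℝ (Fin d)), ξ ≠ 0 →
        (∫ s in Set.Ioc (0 : ℝ) t, Real.exp (-δ * (t - s) * ‖ξ‖ ^ 2) * s ^ (-(2 / p)))
          ≤ C * δ ^ (-(1 - 1 / p)) * t ^ (-(1 / p)) * ‖ξ‖ ^ (-(2 * (1 - 1 / p))) := by
  have hp0 : 0 < p := by linarith
  set a : ℝ := 1 - 1/p with ha_def
  have hb0 : (0:ℝ) < 2/p := by positivity
  have hb1 : 2/p < 1 := by rw [div_lt_one hp0]; linarith
  have hip : 0 < 1/p := by positivity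
  have hip1 : 1/p < 1/2 := by rw [div_lt_div_iff₀ hp0 (by norm_num)]; linarith
  have ha0 : 0 < a := by simp only [ha_def]; linarith
  have ha1 : a < 1 := by simp only [ha_def]; linarith
  have h1b : 0 < 1 - 2/p := by linarith
  have h1a : 0 < 1 - a := by linarith
  refine ⟨2 * (1/(1 - 2/p) + 1/(1 - a)), by positivity, ?_⟩
  intro δ t hδ ht d ξ hξ
  have hN : 0 < ‖ξ‖ := norm_pos_iff.mpr hξ
  set A : ℝ := δ * ‖ξ‖ ^ 2 with hA_def
  have hA : 0 < A := by positivity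
  set f : ℝ → ℝ := fun s => Real.exp (-δ * (t - s) * ‖ξ‖ ^ 2) * s ^ (-(2 / p)) with hf_def
  have hfm : AEStronglyMeasurable f (volume.restrict (Set.Ioc (0:ℝ) t)) := by
    apply Measurable.aestronglyMeasurable
    fun_prop
  have ht2 : 0 < t/2 := by linarith
  -- pointwise bound on (0, t/2]
  have hbound1 : ∀ s ∈ Set.Ioc (0:ℝ) (t/2), f s ≤ (A * (t/2)) ^ (-a) * s ^ (-(2/p)) := by
    intro s hs
    have hts : t/2 ≤ t - s := by linarith [hs.2]
    have hts0 : 0 < t - s := by linarith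
    have hspos : 0 < s := hs.1
    have h1 : Real.exp (-δ * (t - s) * ‖ξ‖ ^ 2) ≤ (A * (t/2)) ^ (-a) := by
      have he : -δ * (t - s) * ‖ξ‖ ^ 2 = -(A * (t - s)) := by rw [hA_def]; ring
      rw [he]
      calc Real.exp (-(A * (t - s))) ≤ (A * (t - s)) ^ (-a) :=
            exp_neg_le_rpow_neg ha0 ha1.le (by positivity)
        _ ≤ (A * (t/2)) ^ (-a) := by
            apply Real.rpow_le_rpow_of_nonpos (by positivity) _ (by linarith)
            nlinarith
    have h2 : (0:ℝ) ≤ s ^ (-(2/p)) := Real.rpow_nonneg hspos.le _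
    exact mul_le_mul_of_nonneg_right h1 h2
  -- pointwise bound on (t/2, t)
  have hbound2 : ∀ s ∈ Set.Ioo (t/2) t, f s ≤ ((t/2) ^ (-(2/p)) * A ^ (-a)) * (t - s) ^ (-a) := by
    intro s hs
    have hts0 : 0 < t - s := by linarith [hs.2]
    have hspos : 0 < s := by linarith [hs.1]
    have h1 : Real.exp (-δ * (t - s) * ‖ξ‖ ^ 2) ≤ A ^ (-a) * (t - s) ^ (-a) := by
      have he : -δ * (t - s) * ‖ξ‖ ^ 2 = -(A * (t - s)) := by rw [hA_def]; ring
      rw [he, ← Real.mul_rpow hA.le hts0.le]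
      exact exp_neg_le_rpow_neg ha0 ha1.le (by positivity)
    have h2 : s ^ (-(2/p)) ≤ (t/2) ^ (-(2/p)) :=
      Real.rpow_le_rpow_of_nonpos ht2 hs.1.le (by linarith)
    calc f s ≤ (A ^ (-a) * (t - s) ^ (-a)) * ((t/2) ^ (-(2/p))) := by
          apply mul_le_mul h1 h2 (Real.rpow_nonneg hspos.le _)
          positivity
      _ = ((t/2) ^ (-(2/p)) * A ^ (-a)) * (t - s) ^ (-a) := by ring
  -- integrability of majorants
  have hIg1 : IntegrableOn (fun s => (A * (t/2)) ^ (-a) * s ^ (-(2/p))) (Set.Ioc (0:ℝ) (t/2)) := by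
    have h : IntervalIntegrable (fun x : ℝ => x ^ (-(2/p))) volume 0 (t/2) :=
      intervalIntegral.intervalIntegrable_rpow' (by linarith)
    exact ((intervalIntegrable_iff_integrableOn_Ioc_of_le ht2.le).mp h).const_mul _
  have hIg2 : IntegrableOn (fun s => ((t/2) ^ (-(2/p)) * A ^ (-a)) * (t - s) ^ (-a))
      (Set.Ioo (t/2) t) := by
    have h := (intervalIntegral.intervalIntegrable_rpow' (a := 0) (b := t/2)
      (by linarith : (-1:ℝ) < -a)).comp_sub_left t
    simp only [sub_zero] at h
    have h2 : IntegrableOn (fun s : ℝ => (t - s) ^ (-a)) (Set.Ioc (t/2) t) := by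
      have := (intervalIntegrable_iff_integrableOn_Ioc_of_le (by linarith : t - t/2 ≤ t)).mp h.symm
      simpa [show t - t/2 = t/2 by ring] using this
    exact (((integrableOn_Ioc_iff_integrableOn_Ioo).mp h2).const_mul _)
  -- integrability of f on the pieces
  have hI1 : IntegrableOn f (Set.Ioc (0:ℝ) (t/2)) := by
    apply hIg1.mono' (hfm.mono_measure (Measure.restrict_mono (by
      intro x hx; exact ⟨hx.1, le_trans hx.2 (by linarith)⟩) le_rfl))
    filter_upwards [ae_restrict_mem measurableSet_Ioc] with s hs
    rw [Real.norm_eq_abs, abs_of_nonneg (mul_nonneg (Real.exp_pos _).le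
      (Real.rpow_nonneg hs.1.le _))]
    exact hbound1 s hs
  have hI2 : IntegrableOn f (Set.Ioo (t/2) t) := by
    apply hIg2.mono' (hfm.mono_measure (Measure.restrict_mono (by
      intro x hx; exact ⟨by linarith [hx.1], hx.2.le⟩) le_rfl))
    filter_upwards [ae_restrict_mem measurableSet_Ioo] with s hs
    rw [Real.norm_eq_abs, abs_of_nonneg (mul_nonneg (Real.exp_pos _).le
      (Real.rpow_nonneg (by nlinarith [hs.1, ht2] : (0:ℝ) ≤ s) _))]
    exact hbound2 s hs
  -- split the integral
  have hsplit : (∫ s in Set.Ioc (0:ℝ) t, f s)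
      = (∫ s in Set.Ioc (0:ℝ) (t/2), f s) + ∫ s in Set.Ioo (t/2) t, f s := by
    rw [← Set.Ioc_union_Ioc_eq_Ioc ht2.le (by linarith : t/2 ≤ t),
      MeasureTheory.setIntegral_union (Set.Ioc_disjoint_Ioc_of_le le_rfl) measurableSet_Ioc hI1
        ((integrableOn_Ioc_iff_integrableOn_Ioo).mpr hI2)]
    congr 1
    exact MeasureTheory.integral_Ioc_eq_integral_Ioo
  -- compute the two majorant integrals
  have hval1 : (∫ s in Set.Ioc (0:ℝ) (t/2), s ^ (-(2/p)))
      = (t/2) ^ (1 - 2/p) / (1 - 2/p) := by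
    rw [← intervalIntegral.integral_of_le ht2.le,
      integral_rpow (Or.inl (by linarith : (-1:ℝ) < -(2/p)))]
    rw [Real.zero_rpow (by linarith : -(2/p) + 1 ≠ 0)]
    ring_nf
  have hval2 : (∫ s in Set.Ioo (t/2) t, (t - s) ^ (-a))
      = (t/2) ^ (1 - a) / (1 - a) := by
    rw [← MeasureTheory.integral_Ioc_eq_integral_Ioo,
      ← intervalIntegral.integral_of_le (by linarith : t/2 ≤ t)]
    rw [show (fun s => (t - s) ^ (-a)) = fun s => (fun x => x ^ (-a)) (t - s) from rfl]
    rw [intervalIntegral.integral_comp_sub_left (fun x => x ^ (-a)) t]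
    rw [sub_self, show t - t/2 = t/2 by ring]
    rw [integral_rpow (Or.inl (by linarith : (-1:ℝ) < -a))]
    rw [Real.zero_rpow (by linarith : -a + 1 ≠ 0)]
    ring_nf
  -- bound each piece
  have hle1 : (∫ s in Set.Ioc (0:ℝ) (t/2), f s)
      ≤ (A * (t/2)) ^ (-a) * ((t/2) ^ (1 - 2/p) / (1 - 2/p)) := by
    calc (∫ s in Set.Ioc (0:ℝ) (t/2), f s)
        ≤ ∫ s in Set.Ioc (0:ℝ) (t/2), (A * (t/2)) ^ (-a) * s ^ (-(2/p)) :=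
          setIntegral_mono_on hI1 hIg1 measurableSet_Ioc hbound1
      _ = (A * (t/2)) ^ (-a) * ((t/2) ^ (1 - 2/p) / (1 - 2/p)) := by
          rw [MeasureTheory.integral_const_mul, hval1]
  have hle2 : (∫ s in Set.Ioo (t/2) t, f s)
      ≤ ((t/2) ^ (-(2/p)) * A ^ (-a)) * ((t/2) ^ (1 - a) / (1 - a)) := by
    calc (∫ s in Set.Ioo (t/2) t, f s)
        ≤ ∫ s in Set.Ioo (t/2) t, ((t/2) ^ (-(2/p)) * A ^ (-a)) * (t - s) ^ (-a) :=
          setIntegral_mono_on hI2 hIg2 measurableSet_Ioo hbound2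
      _ = ((t/2) ^ (-(2/p)) * A ^ (-a)) * ((t/2) ^ (1 - a) / (1 - a)) := by
          rw [MeasureTheory.integral_const_mul, hval2]
  -- final arithmetic
  -- final arithmetic
  have hmt : ∀ r : ℝ, (t/2) ^ (-a) * (t/2) ^ r = (t/2) ^ (-a + r) :=
    fun r => (Real.rpow_add ht2 (-a) r).symm
  have key1 : (A * (t/2)) ^ (-a) * ((t/2) ^ (1 - 2/p) / (1 - 2/p))
      = A ^ (-a) * (t/2) ^ (-(1/p)) * (1/(1 - 2/p)) := by
    rw [Real.mul_rpow hA.le ht2.le]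
    have h : (t/2) ^ (-a) * (t/2) ^ (1 - 2/p) = (t/2) ^ (-(1/p)) := by
      rw [← Real.rpow_add ht2]; congr 1; rw [ha_def]; ring
    rw [← h]; ring
  have key2 : ((t/2) ^ (-(2/p)) * A ^ (-a)) * ((t/2) ^ (1 - a) / (1 - a))
      = A ^ (-a) * (t/2) ^ (-(1/p)) * (1/(1 - a)) := by
    have h : (t/2) ^ (-(2/p)) * (t/2) ^ (1 - a) = (t/2) ^ (-(1/p)) := by
      rw [← Real.rpow_add ht2]; congr 1; rw [ha_def]; ring
    rw [← h]; ring
  have hApow : A ^ (-a) = δ ^ (-a) * ‖ξ‖ ^ (-(2 * a)) := by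
    rw [hA_def, Real.mul_rpow hδ.le (by positivity), ← Real.rpow_natCast ‖ξ‖ 2,
      ← Real.rpow_mul hN.le]
    congr 2
    push_cast
    ring
  have htpow : (t/2) ^ (-(1/p)) = t ^ (-(1/p)) * 2 ^ (1/p) := by
    rw [div_eq_mul_inv, Real.mul_rpow ht.le (by norm_num),
      Real.inv_rpow (by norm_num : (0:ℝ) ≤ 2), ← Real.rpow_neg (by norm_num : (0:ℝ) ≤ 2),
      neg_neg]
  have h2p : (2:ℝ) ^ (1/p) ≤ 2 := by
    calc (2:ℝ) ^ (1/p) ≤ 2 ^ (1:ℝ) :=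
          Real.rpow_le_rpow_of_exponent_le one_le_two (by linarith)
      _ = 2 := Real.rpow_one 2
  set K : ℝ := 1/(1 - 2/p) + 1/(1 - a) with hK_def
  have hK : 0 < K := by positivity
  calc (∫ s in Set.Ioc (0:ℝ) t, f s)
      = (∫ s in Set.Ioc (0:ℝ) (t/2), f s) + ∫ s in Set.Ioo (t/2) t, f s := hsplit
    _ ≤ (A * (t/2)) ^ (-a) * ((t/2) ^ (1 - 2/p) / (1 - 2/p))
        + ((t/2) ^ (-(2/p)) * A ^ (-a)) * ((t/2) ^ (1 - a) / (1 - a)) := add_le_add hle1 hle2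
    _ = A ^ (-a) * (t/2) ^ (-(1/p)) * K := by rw [key1, key2, hK_def]; ring
    _ = (δ ^ (-a) * ‖ξ‖ ^ (-(2 * a)) * t ^ (-(1/p)) * K) * 2 ^ (1/p) := by
        rw [hApow, htpow]; ring
    _ ≤ (δ ^ (-a) * ‖ξ‖ ^ (-(2 * a)) * t ^ (-(1/p)) * K) * 2 := by
        apply mul_le_mul_of_nonneg_left h2p
        have h1 : (0:ℝ) ≤ δ ^ (-a) := Real.rpow_nonneg hδ.le _
        have h2 : (0:ℝ) ≤ ‖ξ‖ ^ (-(2 * a)) := Real.rpow_nonneg hN.le _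
        have h3 : (0:ℝ) ≤ t ^ (-(1/p)) := Real.rpow_nonneg ht.le _
        positivity
    _ = 2 * K * δ ^ (-a) * t ^ (-(1/p)) * ‖ξ‖ ^ (-(2 * a)) := by ring
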